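/- For every integer p ≥ 2 there exists C > 0 and Z₀ such that for all z ≥ Z₀, ∫_z^∞ (s − z)^p φ(s) ds ≤ C · p! · φ(z) / z^{p+1}; moreover lim_{z→∞} ( ∫_z^∞ (s−z)^p φ(s) ds ) / ( p!·φ(z)/z^{p+1} ) = 1. -/

import Mathlib

open Real MeasureTheory Filter

noncomputable def phi (z : ℝ) : ℝ := (Real.sqrt (2 * Real.pi))⁻¹ * Real.exp (-z ^ 2 / 2)

lemma phi_pos (z : ℝ) : 0 < phi z := by
  have : (0:ℝ) < Real.sqrt (2 * Real.pi) := Real.sqrt_pos.mpr (by positivity)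
  unfold phi; positivity

lemma integrableOn_pow_exp (n : ℕ) {z : ℝ} (hz : 0 < z) :
    IntegrableOn (fun t : ℝ => t ^ n * Real.exp (-(z * t))) (Set.Ioi 0) := by
  have h := integrableOn_rpow_mul_exp_neg_mul_rpow (p := 1) (s := (n : ℝ)) (b := z)
    (by exact lt_of_lt_of_le (by norm_num) (Nat.cast_nonneg n)) one_pos hz
  refine h.congr_fun (fun x hx => ?_) measurableSet_Ioi
  beta_reduce
  rw [Real.rpow_one, Real.rpow_natCast, neg_mul]

lemma integral_pow_exp (n : ℕ) {z : ℝ} (hz : 0 < z) :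
    ∫ t in Set.Ioi 0, t ^ n * Real.exp (-(z * t)) = n.factorial / z ^ (n + 1) := by
  have h := Real.integral_rpow_mul_exp_neg_mul_Ioi (a := (n : ℝ) + 1) (r := z)
    (by positivity) hz
  rw [add_sub_cancel_right] at h
  have h2 : ∫ t in Set.Ioi 0, t ^ (n : ℝ) * Real.exp (-(z * t))
      = ∫ t in Set.Ioi 0, t ^ n * Real.exp (-(z * t)) := by
    refine setIntegral_congr_fun measurableSet_Ioi (fun x _ => ?_)
    rw [Real.rpow_natCast]
  rw [h2] at h
  rw [h, Real.Gamma_nat_eq_factorial,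
    show ((n : ℝ) + 1) = ((n + 1 : ℕ) : ℝ) by push_cast; ring, Real.rpow_natCast]
  rw [div_pow, one_pow, div_mul_eq_mul_div, one_mul]

lemma key_rewrite (p : ℕ) (z : ℝ) :
    (∫ s in Set.Ici z, (s - z) ^ p * phi s)
      = phi z * ∫ t in Set.Ioi 0, t ^ p * Real.exp (-(z * t) - t ^ 2 / 2) := by
  have h0 : (∫ s in Set.Ici z, (s - z) ^ p * phi s)
      = ∫ s in Set.Ioi z, (s - z) ^ p * phi s := by
    rw [← MeasureTheory.integral_Ici_eq_integral_Ioi]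
  have h1 := (measurePreserving_add_right volume z).setIntegral_preimage_emb
      (measurableEmbedding_addRight z) (fun s => (s - z) ^ p * phi s) (Set.Ioi z)
  have hpre : (· + z) ⁻¹' Set.Ioi z = Set.Ioi (0:ℝ) := by
    ext x; simp [Set.mem_preimage, Set.mem_Ioi]
  rw [hpre] at h1
  rw [h0, ← h1, ← MeasureTheory.integral_const_mul]
  refine setIntegral_congr_fun measurableSet_Ioi (fun t _ => ?_)
  unfold phi
  rw [add_sub_cancel_right]
  rw [show -(t + z) ^ 2 / 2 = -z ^ 2 / 2 + (-(z * t) - t ^ 2 / 2) by ring, Real.exp_add]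
  ring

lemma integrableOn_main (p : ℕ) {z : ℝ} (hz : 0 < z) :
    IntegrableOn (fun t : ℝ => t ^ p * Real.exp (-(z * t) - t ^ 2 / 2)) (Set.Ioi 0) := by
  refine (integrableOn_pow_exp p hz).mono' ?_ ?_
  · exact (Measurable.mul (by fun_prop) (by fun_prop)).aestronglyMeasurable
  · filter_upwards [ae_restrict_mem measurableSet_Ioi] with t ht
    rw [Real.norm_eq_abs, abs_mul, abs_of_nonneg (pow_nonneg (le_of_lt ht) p),
      abs_of_nonneg (Real.exp_pos _).le]
    have : Real.exp (-(z * t) - t ^ 2 / 2) ≤ Real.exp (-(z * t)) :=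
      Real.exp_le_exp.mpr (by nlinarith)
    exact mul_le_mul_of_nonneg_left this (pow_nonneg (le_of_lt ht) p)

lemma upper_bound (p : ℕ) {z : ℝ} (hz : 0 < z) :
    (∫ t in Set.Ioi 0, t ^ p * Real.exp (-(z * t) - t ^ 2 / 2))
      ≤ p.factorial / z ^ (p + 1) := by
  rw [← integral_pow_exp p hz]
  refine setIntegral_mono_on (integrableOn_main p hz) (integrableOn_pow_exp p hz)
    measurableSet_Ioi (fun t ht => ?_)
  have : Real.exp (-(z * t) - t ^ 2 / 2) ≤ Real.exp (-(z * t)) :=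
    Real.exp_le_exp.mpr (by nlinarith [Set.mem_Ioi.mp ht])
  exact mul_le_mul_of_nonneg_left this (pow_nonneg (le_of_lt ht) p)

lemma lower_bound (p : ℕ) {z : ℝ} (hz : 0 < z) :
    (p.factorial : ℝ) / z ^ (p + 1) - (p + 2).factorial / (2 * z ^ (p + 3))
      ≤ ∫ t in Set.Ioi 0, t ^ p * Real.exp (-(z * t) - t ^ 2 / 2) := by
  have hval : ∫ t in Set.Ioi 0,
      (t ^ p * Real.exp (-(z * t)) - t ^ (p + 2) * Real.exp (-(z * t)) / 2)
      = (p.factorial : ℝ) / z ^ (p + 1) - (p + 2).factorial / (2 * z ^ (p + 3)) := by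
    rw [integral_sub (integrableOn_pow_exp p hz)
      ((integrableOn_pow_exp (p + 2) hz).div_const 2)]
    rw [integral_div, integral_pow_exp p hz, integral_pow_exp (p + 2) hz]
    ring
  rw [← hval]
  refine setIntegral_mono_on ((integrableOn_pow_exp p hz).sub
    ((integrableOn_pow_exp (p + 2) hz).div_const 2)) (integrableOn_main p hz)
    measurableSet_Ioi (fun t ht => ?_)
  have ht0 : (0:ℝ) < t := Set.mem_Ioi.mp ht
  have h1 : Real.exp (-(z * t) - t ^ 2 / 2) = Real.exp (-(z * t)) * Real.exp (-(t ^ 2 / 2)) := by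
    rw [← Real.exp_add]; ring_nf
  have h2 : 1 - t ^ 2 / 2 ≤ Real.exp (-(t ^ 2 / 2)) := by
    have := Real.add_one_le_exp (-(t ^ 2 / 2)); linarith
  rw [h1]
  have hexp : (0:ℝ) < Real.exp (-(z * t)) := Real.exp_pos _
  have hpow : (0:ℝ) ≤ t ^ p := pow_nonneg ht0.le p
  calc t ^ p * Real.exp (-(z * t)) - t ^ (p + 2) * Real.exp (-(z * t)) / 2
      = t ^ p * Real.exp (-(z * t)) * (1 - t ^ 2 / 2) := by ring
    _ ≤ t ^ p * Real.exp (-(z * t)) * Real.exp (-(t ^ 2 / 2)) := by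
        exact mul_le_mul_of_nonneg_left h2 (by positivity)
    _ = t ^ p * (Real.exp (-(z * t)) * Real.exp (-(t ^ 2 / 2))) := by ring

theorem excess_moment_asymptotic (p : ℕ) (hp : 2 ≤ p) :
    (∃ C > (0 : ℝ), ∃ Z₀ : ℝ, ∀ z ≥ Z₀,
        (∫ s in Set.Ici z, (s - z) ^ p * phi s) ≤
          C * (Nat.factorial p) * phi z / z ^ (p + 1)) ∧
    Tendsto (fun z : ℝ =>
        (∫ s in Set.Ici z, (s - z) ^ p * phi s) /
          ((Nat.factorial p) * phi z / z ^ (p + 1)))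
      atTop (nhds 1) := by
  have hfac : (0:ℝ) < (p.factorial : ℝ) := by exact_mod_cast p.factorial_pos
  have hub : ∀ z : ℝ, 0 < z →
      (∫ s in Set.Ici z, (s - z) ^ p * phi s) ≤ (p.factorial : ℝ) * phi z / z ^ (p + 1) := by
    intro z hz
    rw [key_rewrite]
    have := upper_bound p hz
    have hφ := (phi_pos z).le
    calc phi z * ∫ t in Set.Ioi 0, t ^ p * Real.exp (-(z * t) - t ^ 2 / 2)
        ≤ phi z * ((p.factorial : ℝ) / z ^ (p + 1)) := mul_le_mul_of_nonneg_left this hφ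
      _ = (p.factorial : ℝ) * phi z / z ^ (p + 1) := by ring
  constructor
  · exact ⟨1, one_pos, 1, fun z hz => by
      simpa using hub z (lt_of_lt_of_le one_pos hz)⟩
  · -- squeeze
    have hratio : ∀ z : ℝ, 0 < z →
        (∫ s in Set.Ici z, (s - z) ^ p * phi s) /
          ((p.factorial : ℝ) * phi z / z ^ (p + 1))
        = (∫ t in Set.Ioi 0, t ^ p * Real.exp (-(z * t) - t ^ 2 / 2))
            * z ^ (p + 1) / (p.factorial : ℝ) := by
      intro z hz
      rw [key_rewrite]
      have hφ := phi_pos z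
      have hzp : (0:ℝ) < z ^ (p + 1) := by positivity
      field_simp
    have hlow : ∀ᶠ z : ℝ in atTop,
        1 - ((p + 2).factorial : ℝ) / (2 * (p.factorial : ℝ)) / z ^ 2
          ≤ (∫ s in Set.Ici z, (s - z) ^ p * phi s) /
              ((p.factorial : ℝ) * phi z / z ^ (p + 1)) := by
      filter_upwards [eventually_gt_atTop 0] with z hz
      rw [hratio z hz]
      have hlb := lower_bound p hz
      have hzp : (0:ℝ) < z ^ (p + 1) := by positivity
      have h1 : ((p.factorial : ℝ) / z ^ (p + 1) - ((p + 2).factorial : ℝ) / (2 * z ^ (p + 3)))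
          * z ^ (p + 1) / (p.factorial : ℝ)
          = 1 - ((p + 2).factorial : ℝ) / (2 * (p.factorial : ℝ)) / z ^ 2 := by
        have hz2 : z ^ (p + 3) = z ^ (p + 1) * z ^ 2 := by ring
        field_simp [hz2]
        ring
      rw [← h1]
      have := mul_le_mul_of_nonneg_right hlb hzp.le
      gcongr
    have hhigh : ∀ᶠ z : ℝ in atTop,
        (∫ s in Set.Ici z, (s - z) ^ p * phi s) /
            ((p.factorial : ℝ) * phi z / z ^ (p + 1)) ≤ 1 := by
      filter_upwards [eventually_gt_atTop 0] with z hz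
      rw [hratio z hz]
      have hub' := upper_bound p hz
      have hzp : (0:ℝ) < z ^ (p + 1) := by positivity
      rw [div_le_one hfac]
      have := mul_le_mul_of_nonneg_right hub' hzp.le
      calc (∫ t in Set.Ioi 0, t ^ p * Real.exp (-(z * t) - t ^ 2 / 2)) * z ^ (p + 1)
          ≤ (p.factorial : ℝ) / z ^ (p + 1) * z ^ (p + 1) := this
        _ = (p.factorial : ℝ) := by field_simp
    have hlim : Tendsto (fun z : ℝ =>
        1 - ((p + 2).factorial : ℝ) / (2 * (p.factorial : ℝ)) / z ^ 2) atTop (nhds 1) := by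
      have : Tendsto (fun z : ℝ => ((p + 2).factorial : ℝ) / (2 * (p.factorial : ℝ)) / z ^ 2)
          atTop (nhds 0) := by
        apply Tendsto.div_atTop tendsto_const_nhds
        exact tendsto_pow_atTop (two_ne_zero)
      simpa using (tendsto_const_nhds (x := (1:ℝ)) (f := atTop)).sub this
    exact tendsto_of_tendsto_of_tendsto_of_le_of_le' hlim tendsto_const_nhds hlow hhigh
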